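/- arXiv:1412.4852 — 2 statements merged into one kernel-verified Lean document; each statement's English description precedes it below -/
import Mathlib

section
/- Let μ be a Borel probability measure on ℝ with compact support, and let Λ be a countable set of reals containing 0. If ∑_{λ∈Λ} |μ̂(ξ+λ)|² = 1 for all ξ ∈ ℝ, then {e^{-2πiλx} : λ ∈ Λ} is an orthonormal basis of L²(μ); conversely if {e^{-2πiλx} : λ ∈ Λ} is an orthonormal basis of L²(μ), then ∑_{λ∈Λ}|μ̂(ξ+λ)|² = 1 for all ξ. -/
open MeasureTheory

/-- Fourier transform of a measure: `μ̂(ξ) = ∫ e^{-2πiξx} dμ(x)`. -/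
noncomputable def muHat (μ : Measure ℝ) (ξ : ℝ) : ℂ :=
  ∫ x, Complex.exp (-2 * Real.pi * Complex.I * ξ * x) ∂μ

open scoped InnerProductSpace ComplexConjugate ENNReal NNReal

noncomputable def efun (t : ℝ) : ℝ → ℂ := fun x => Complex.exp (-2 * Real.pi * Complex.I * t * x)

lemma efun_cont (t : ℝ) : Continuous (efun t) := by
  unfold efun; fun_prop

lemma efun_norm (t x : ℝ) : ‖efun t x‖ = 1 := by
  unfold efun
  rw [Complex.norm_exp]
  have : (-2 * ↑Real.pi * Complex.I * ↑t * ↑x).re = 0 := by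
    simp [Complex.mul_re, Complex.mul_im]
  simp [this]

lemma efun_conj (t x : ℝ) : conj (efun t x) = efun (-t) x := by
  unfold efun
  rw [← Complex.exp_conj]
  congr 1
  simp only [map_mul, Complex.conj_I, Complex.conj_ofReal, map_neg, map_ofNat]
  push_cast
  ring

lemma efun_mul (s t x : ℝ) : efun s x * efun t x = efun (s + t) x := by
  unfold efun
  rw [← Complex.exp_add]
  congr 1
  push_cast
  ring

lemma efun_zero (x : ℝ) : efun 0 x = 1 := by simp [efun]

lemma efun_memLp (μ : Measure ℝ) [IsFiniteMeasure μ] (t : ℝ) : MemLp (efun t) 2 μ :=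
  MemLp.of_bound ((efun_cont t).aestronglyMeasurable) 1
    (Filter.Eventually.of_forall fun x => le_of_eq (efun_norm t x))

lemma muHat_eq (μ : Measure ℝ) (ξ : ℝ) : muHat μ ξ = ∫ x, efun ξ x ∂μ := rfl


open scoped InnerProductSpace ComplexConjugate ENNReal NNReal

section Main
variable (μ : Measure ℝ) [IsProbabilityMeasure μ]

noncomputable def EL (t : ℝ) : Lp ℂ 2 μ := (efun_memLp μ t).toLp (efun t)

variable {μ}

lemma inner_toLp (t : ℝ) (f : ℝ → ℂ) (hf : MemLp f 2 μ) :
    ⟪EL μ t, hf.toLp f⟫_ℂ = ∫ x, f x * conj (efun t x) ∂μ := by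
  rw [MeasureTheory.L2.inner_def]
  refine integral_congr_ae ?_
  filter_upwards [(efun_memLp μ t).coeFn_toLp, hf.coeFn_toLp] with x h1 h2
  rw [RCLike.inner_apply]
  simp only [EL] at h1 ⊢
  rw [h1, h2, mul_comm]

lemma inner_EL (t : ℝ) (F : Lp ℂ 2 μ) :
    ⟪EL μ t, F⟫_ℂ = ∫ x, F x * conj (efun t x) ∂μ := by
  have h := inner_toLp t (F : ℝ → ℂ) (Lp.memLp F)
  rwa [Lp.toLp_coeFn F] at h

lemma inner_EL_EL (s t : ℝ) : ⟪EL μ s, EL μ t⟫_ℂ = muHat μ (t - s) := by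
  rw [show EL μ t = (efun_memLp μ t).toLp (efun t) from rfl, inner_toLp, muHat_eq]
  refine integral_congr_ae (Filter.Eventually.of_forall fun x => ?_)
  show efun t x * conj (efun s x) = _
  rw [efun_conj, efun_mul, sub_eq_add_neg]

lemma muHat_zero : muHat μ 0 = 1 := by
  rw [muHat_eq]
  simp [efun_zero]

lemma norm_EL_sq (t : ℝ) : ‖EL μ t‖ ^ 2 = 1 := by
  have h : ⟪EL μ t, EL μ t⟫_ℂ = ((‖EL μ t‖ : ℂ)) ^ 2 := inner_self_eq_norm_sq_to_K _
  rw [inner_EL_EL, sub_self, muHat_zero] at h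
  exact_mod_cast h.symm

omit [IsProbabilityMeasure μ] in
lemma muHat_neg (ξ : ℝ) : muHat μ (-ξ) = conj (muHat μ ξ) := by
  rw [muHat_eq, muHat_eq, ← integral_conj]
  refine integral_congr_ae (Filter.Eventually.of_forall fun x => ?_)
  exact (efun_conj ξ x).symm

end Main

section Density
variable {μ : Measure ℝ} [IsProbabilityMeasure μ]

lemma efun_sep {x y : ℝ} (h : x ≠ y) : ∃ t : ℝ, efun t x ≠ efun t y := by
  refine ⟨-1 / (2 * (x - y)), ?_⟩
  have hxy : (x : ℂ) - y ≠ 0 := by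
    simpa using sub_ne_zero.mpr (fun hh => h (by exact_mod_cast hh))
  set t : ℝ := -1 / (2 * (x - y)) with ht'
  have ht : (t : ℂ) * ((x : ℂ) - y) = -1 / 2 := by
    rw [ht']
    push_cast
    field_simp
  have key : efun t x = Complex.exp (Real.pi * Complex.I) * efun t y := by
    unfold efun
    rw [← Complex.exp_add]
    congr 1
    linear_combination (-2 * (Real.pi : ℂ) * Complex.I) * ht
  rw [Complex.exp_pi_mul_I] at key
  intro hcon
  rw [hcon] at key
  have h0 : efun t y ≠ 0 := Complex.exp_ne_zero _
  apply h0
  have h2 : (2 : ℂ) * efun t y = 0 := by linear_combination key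
  rcases mul_eq_zero.mp h2 with h' | h'
  · norm_num at h'
  · exact h' 

end Density

section SW
variable (K : Set ℝ)

noncomputable def eeK (t : ℝ) : C(K, ℂ) := ContinuousMap.restrict K ⟨efun t, efun_cont t⟩

lemma eeK_apply (t : ℝ) (x : K) : eeK K t x = efun t x := rfl

lemma eeK_mul (s t : ℝ) : eeK K s * eeK K t = eeK K (s + t) := by
  ext x; exact efun_mul s t x

lemma eeK_star (t : ℝ) : star (eeK K t) = eeK K (-t) := by
  ext x
  show conj (eeK K t x) = _
  rw [eeK_apply, eeK_apply, efun_conj]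

lemma eeK_one : eeK K 0 = 1 := by
  ext x; exact efun_zero x

noncomputable def eeKM : Submonoid C(K, ℂ) where
  carrier := Set.range (eeK K)
  one_mem' := ⟨0, eeK_one K⟩
  mul_mem' := by rintro _ _ ⟨s, rfl⟩ ⟨t, rfl⟩; exact ⟨s + t, (eeK_mul K s t).symm⟩

lemma adjoin_eeK_eq_span :
    (StarAlgebra.adjoin ℂ (Set.range (eeK K))).toSubalgebra.toSubmodule
      = Submodule.span ℂ (Set.range (eeK K)) := by
  rw [StarAlgebra.adjoin_eq_span]
  congr 1
  have hstar : Set.range (eeK K) ∪ star (Set.range (eeK K)) = Set.range (eeK K) := by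
    apply Set.union_eq_self_of_subset_right
    intro f hf
    rw [Set.mem_star] at hf
    obtain ⟨t, ht⟩ := hf
    exact ⟨-t, by rw [← eeK_star, ht, star_star]⟩
  rw [hstar, show Set.range (eeK K) = (eeKM K : Set C(K, ℂ)) from rfl, Submonoid.closure_eq]

lemma span_eeK_dense [CompactSpace K] (g : C(K, ℂ)) {ε : ℝ} (hε : 0 < ε) :
    ∃ p ∈ Submodule.span ℂ (Set.range (eeK K)), ‖g - p‖ < ε := by
  set A := StarAlgebra.adjoin ℂ (Set.range (eeK K)) with hA
  have hsep : A.SeparatesPoints := by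
    intro x y hxy
    have hxy' : (x : ℝ) ≠ (y : ℝ) := fun h => hxy (Subtype.ext h)
    obtain ⟨t, ht⟩ := efun_sep hxy'
    exact ⟨⇑(eeK K t), ⟨eeK K t, StarAlgebra.subset_adjoin ℂ _ ⟨t, rfl⟩, rfl⟩, ht⟩
  have htop := ContinuousMap.starSubalgebra_topologicalClosure_eq_top_of_separatesPoints A hsep
  have hg : g ∈ closure (A : Set C(K, ℂ)) := by
    rw [← StarSubalgebra.topologicalClosure_coe, htop]
    exact Set.mem_univ _
  obtain ⟨p, hpA, hdist⟩ := Metric.mem_closure_iff.mp hg ε hε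
  refine ⟨p, ?_, by rwa [← dist_eq_norm]⟩
  have : p ∈ (StarAlgebra.adjoin ℂ (Set.range (eeK K))).toSubalgebra.toSubmodule := hpA
  rwa [adjoin_eeK_eq_span] at this

end SW

section Density2
variable {μ : Measure ℝ} [IsProbabilityMeasure μ] {K : Set ℝ}

lemma span_transfer (p : C(K, ℂ)) (hp : p ∈ Submodule.span ℂ (Set.range (eeK K))) :
    ∃ G : Lp ℂ 2 μ, G ∈ Submodule.span ℂ (Set.range (EL μ)) ∧
      ∀ᵐ x ∂μ, ∀ hx : x ∈ K, (G : ℝ → ℂ) x = p ⟨x, hx⟩ := by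
  induction hp using Submodule.span_induction with
  | mem q hq =>
    obtain ⟨t, rfl⟩ := hq
    refine ⟨EL μ t, Submodule.subset_span ⟨t, rfl⟩, ?_⟩
    filter_upwards [(efun_memLp μ t).coeFn_toLp] with x h hx
    exact h
  | zero =>
    refine ⟨0, Submodule.zero_mem _, ?_⟩
    filter_upwards [Lp.coeFn_zero ℂ 2 μ] with x h hx
    simp [h]
  | add q r hq hr ihq ihr =>
    obtain ⟨G₁, hG₁, hG₁ae⟩ := ihq
    obtain ⟨G₂, hG₂, hG₂ae⟩ := ihr
    refine ⟨G₁ + G₂, Submodule.add_mem _ hG₁ hG₂, ?_⟩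
    filter_upwards [Lp.coeFn_add G₁ G₂, hG₁ae, hG₂ae] with x h h1 h2 hx
    rw [h, Pi.add_apply, h1 hx, h2 hx]
    rfl
  | smul c q hq ih =>
    obtain ⟨G, hG, hGae⟩ := ih
    refine ⟨c • G, Submodule.smul_mem _ c hG, ?_⟩
    filter_upwards [Lp.coeFn_smul c G, hGae] with x h h1 hx
    rw [h, Pi.smul_apply, h1 hx]
    rfl

lemma span_EL_dense (hK : IsCompact K) (hμK : μ Kᶜ = 0) :
    (Submodule.span ℂ (Set.range (EL μ))).topologicalClosure = ⊤ := by
  haveI : CompactSpace K := isCompact_iff_compactSpace.mp hK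
  rw [eq_top_iff]
  intro F _
  rw [← SetLike.mem_coe, Submodule.topologicalClosure_coe]
  rw [Metric.mem_closure_iff]
  intro ε hε
  have hε3 : 0 < ε / 3 := by linarith
  obtain ⟨g, hg_close, hg_mem⟩ := (Lp.memLp F).exists_boundedContinuous_eLpNorm_sub_le
    (by norm_num : (2 : ℝ≥0∞) ≠ ⊤) (ne_of_gt (ENNReal.ofReal_pos.mpr hε3))
  set gK : C(K, ℂ) := g.toContinuousMap.restrict K with hgK
  obtain ⟨p, hp_span, hp_close⟩ := span_eeK_dense K gK hε3
  obtain ⟨G, hG_mem, hG_ae⟩ := span_transfer (μ := μ) p hp_span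
  refine ⟨G, hG_mem, ?_⟩
  have hKae : ∀ᵐ x ∂μ, x ∈ K := by
    rw [MeasureTheory.ae_iff]
    exact hμK
  have hbound : ∀ᵐ x ∂μ, ‖g x - (G : ℝ → ℂ) x‖ ≤ ε / 3 := by
    filter_upwards [hKae, hG_ae] with x hx hGx
    rw [hGx hx]
    have : g x - p ⟨x, hx⟩ = (gK - p) ⟨x, hx⟩ := by simp [hgK]
    rw [this]
    exact le_trans (ContinuousMap.norm_coe_le_norm (gK - p) _) (le_of_lt hp_close)
  have h2 : eLpNorm (⇑g - (G : ℝ → ℂ)) 2 μ ≤ ENNReal.ofReal (ε / 3) := by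
    refine le_trans (eLpNorm_le_of_ae_bound hbound) ?_
    simp [measure_univ]
  have h1 : eLpNorm ((F : ℝ → ℂ) - ⇑g) 2 μ ≤ ENNReal.ofReal (ε / 3) := hg_close
  have hsum : eLpNorm ((F : ℝ → ℂ) - (G : ℝ → ℂ)) 2 μ ≤
      ENNReal.ofReal (ε / 3) + ENNReal.ofReal (ε / 3) := by
    have heq : (F : ℝ → ℂ) - (G : ℝ → ℂ)
        = ((F : ℝ → ℂ) - ⇑g) + (⇑g - (G : ℝ → ℂ)) := by
      ext x; simp
    rw [heq]
    refine le_trans (eLpNorm_add_le ?_ ?_ (by norm_num)) (add_le_add h1 h2)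
    · exact (Lp.aestronglyMeasurable F).sub g.continuous.aestronglyMeasurable
    · exact g.continuous.aestronglyMeasurable.sub (Lp.aestronglyMeasurable G)
  rw [Lp.dist_def]
  calc (eLpNorm ((F : ℝ → ℂ) - (G : ℝ → ℂ)) 2 μ).toReal
      ≤ (ENNReal.ofReal (ε / 3) + ENNReal.ofReal (ε / 3)).toReal := by
        apply ENNReal.toReal_mono _ hsum
        simp [ENNReal.add_ne_top]
    _ < ε := by
        rw [← ENNReal.ofReal_add (le_of_lt hε3) (le_of_lt hε3), ENNReal.toReal_ofReal (by linarith)]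
        linarith

end Density2

section Helpers

lemma term_eq_zero {ι : Type*} [DecidableEq ι] {f : ι → ℝ} (hf : ∀ i, 0 ≤ f i) (h1 : ∑' i, f i = 1)
    {i0 i : ι} (hne : i ≠ i0) (hi0 : f i0 = 1) : f i = 0 := by
  have hsum : Summable f := by
    by_contra h
    rw [tsum_eq_zero_of_not_summable h] at h1
    norm_num at h1
  have hle : f i + f i0 ≤ 1 := by
    have := Summable.sum_le_tsum ({i, i0} : Finset ι) (fun j _ => hf j) hsum
    rwa [Finset.sum_pair hne, h1] at this
  have := hf i
  linarith [hi0 ▸ hle]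

variable {μ : Measure ℝ} [IsProbabilityMeasure μ]

omit [IsProbabilityMeasure μ] in
lemma integral_ee (lam lam' : ℝ) :
    (∫ x, efun lam x * conj (efun lam' x) ∂μ) = muHat μ (lam - lam') := by
  rw [muHat_eq]
  refine integral_congr_ae (Filter.Eventually.of_forall fun x => ?_)
  show efun lam x * conj (efun lam' x) = _
  rw [efun_conj, efun_mul, sub_eq_add_neg]

end Helpers

section MainArg
variable {μ : Measure ℝ} [IsProbabilityMeasure μ] {Λ : Set ℝ}

/-- The key projection/Bessel argument: if the Q-function is identically 1, then every
exponential lies in the closed span of the `Λ`-exponentials. -/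
lemma EL_mem_closure (hQ : ∀ ξ : ℝ, ∑' lam : Λ, ‖muHat μ (ξ + lam)‖ ^ 2 = 1)
    (honb : Orthonormal ℂ (fun lam : Λ => EL μ (lam : ℝ)))
    (ξ : ℝ) :
    EL μ ξ ∈ (Submodule.span ℂ (Set.range (fun lam : Λ => EL μ (lam : ℝ)))).topologicalClosure := by
  classical
  set E : Λ → Lp ℂ 2 μ := fun lam => EL μ (lam : ℝ) with hE
  set W := (Submodule.span ℂ (Set.range E)).topologicalClosure with hW
  haveI : CompleteSpace W := (Submodule.isClosed_topologicalClosure _).completeSpace_coe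
  set v : Lp ℂ 2 μ := (W.orthogonalProjectionOnto (EL μ ξ) : Lp ℂ 2 μ) with hv
  have hvW : v ∈ W := Submodule.coe_mem _
  set w : Lp ℂ 2 μ := EL μ ξ - v with hw
  have hwO : w ∈ Wᗮ := Submodule.sub_starProjection_mem_orthogonal (K := W) (EL μ ξ)
  have hEW : ∀ lam : Λ, E lam ∈ W :=
    fun lam => Submodule.le_topologicalClosure _ (Submodule.subset_span ⟨lam, rfl⟩)
  have hinner : ∀ lam : Λ, ⟪E lam, EL μ ξ⟫_ℂ = ⟪E lam, v⟫_ℂ := by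
    intro lam
    have : ⟪E lam, w⟫_ℂ = 0 := (Submodule.mem_orthogonal W w).mp hwO (E lam) (hEW lam)
    have hsplit : EL μ ξ = v + w := by rw [hw]; abel
    rw [hsplit, inner_add_right, this, add_zero]
  -- the Q-sum at `-ξ` equals the sum of squared inner products
  have hQsum : ∑' lam : Λ, ‖⟪E lam, EL μ ξ⟫_ℂ‖ ^ 2 = 1 := by
    rw [← hQ (-ξ)]
    refine tsum_congr fun lam => ?_
    rw [hE]
    show ‖⟪EL μ (lam : ℝ), EL μ ξ⟫_ℂ‖ ^ 2 = _
    rw [inner_EL_EL]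
    have : muHat μ (ξ - lam) = conj (muHat μ (-ξ + lam)) := by
      rw [← muHat_neg]; ring_nf
    rw [this, RCLike.norm_conj]
  -- Bessel for v
  have hBessel : ∑' lam : Λ, ‖⟪E lam, v⟫_ℂ‖ ^ 2 ≤ ‖v‖ ^ 2 :=
    honb.tsum_inner_products_le v
  have hpyth : ‖EL μ ξ‖ ^ 2 = ‖v‖ ^ 2 + ‖w‖ ^ 2 := by
    have hio : ⟪v, w⟫_ℂ = 0 :=
      (Submodule.mem_orthogonal W w).mp hwO v hvW
    have hsplit : EL μ ξ = v + w := by rw [hw]; abel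
    rw [hsplit]
    have := norm_add_sq_eq_norm_sq_add_norm_sq_of_inner_eq_zero v w hio
    nlinarith [this]
  have h1 : ‖EL μ ξ‖ ^ 2 = 1 := norm_EL_sq ξ
  have hwzero : w = 0 := by
    have hsum1 : ∑' lam : Λ, ‖⟪E lam, v⟫_ℂ‖ ^ 2 = 1 := by
      rw [← hQsum]
      exact tsum_congr fun lam => by rw [hinner]
    have : ‖w‖ ^ 2 ≤ 0 := by
      have := hBessel
      rw [hsum1] at this
      nlinarith [norm_nonneg w, norm_nonneg v]
    have : ‖w‖ = 0 := by nlinarith [norm_nonneg w]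
    exact norm_eq_zero.mp this
  have hEq : EL μ ξ = v := by
    have := sub_eq_zero.mp hwzero
    exact this
  rw [hEq]
  exact hvW

end MainArg

section Final
variable {μ : Measure ℝ} [IsProbabilityMeasure μ] {Λ : Set ℝ}

lemma orth_of_muHat (hd : ∀ lam ∈ Λ, ∀ lam' ∈ Λ,
    muHat μ (lam - lam') = if lam = lam' then 1 else 0) :
    Orthonormal ℂ (fun lam : Λ => EL μ (lam : ℝ)) := by
  rw [orthonormal_iff_ite]
  intro i j
  show ⟪EL μ (i : ℝ), EL μ (j : ℝ)⟫_ℂ = _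
  rw [inner_EL_EL, hd j j.2 i i.2]
  rcases eq_or_ne i j with h | h
  · simp [h]
  · have h2 : (j : ℝ) ≠ (i : ℝ) := fun hh => h (Subtype.ext hh.symm)
    rw [if_neg h2, if_neg h]

lemma parseval_sq {ι : Type*} {H : Type*} [NormedAddCommGroup H] [InnerProductSpace ℂ H]
    [CompleteSpace H] (b : HilbertBasis ι ℂ H) (x : H) :
    ∑' i, ‖⟪b i, x⟫_ℂ‖ ^ 2 = ‖x‖ ^ 2 := by
  have h := b.tsum_inner_mul_inner x x
  have hterm : ∀ i, ⟪x, b i⟫_ℂ * ⟪b i, x⟫_ℂ = ((‖⟪b i, x⟫_ℂ‖ ^ 2 : ℝ) : ℂ) := by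
    intro i
    rw [← inner_conj_symm, mul_comm, Complex.mul_conj]
    rw [← Complex.sq_norm]
  simp_rw [hterm] at h
  rw [← Complex.ofReal_tsum] at h
  have hx : ⟪x, x⟫_ℂ = ((‖x‖ ^ 2 : ℝ) : ℂ) := by
    rw [inner_self_eq_norm_sq_to_K]
    norm_cast
  rw [hx] at h
  exact_mod_cast h

end Final

/-- Jorgensen–Pedersen criterion: for a compactly supported Borel
probability measure `μ` and countable `Λ ∋ 0`, `∑_{λ∈Λ}|μ̂(ξ+λ)|² ≡ 1` iff the
exponentials `{e^{-2πiλx}}_{λ∈Λ}` form an orthonormal basis of `L²(μ)`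
(orthonormality together with completeness). -/
theorem stmt9 (μ : Measure ℝ) [IsProbabilityMeasure μ]
    (K : Set ℝ) (hK : IsCompact K) (hμK : μ Kᶜ = 0)
    (Λ : Set ℝ) (hΛ : Λ.Countable) (h0 : (0 : ℝ) ∈ Λ) :
    (∀ ξ : ℝ, ∑' lam : Λ, ‖muHat μ (ξ + lam)‖ ^ 2 = 1) ↔
    ((∀ lam ∈ Λ, ∀ lam' ∈ Λ,
        (∫ x : ℝ, Complex.exp (-2 * Real.pi * Complex.I * lam * x) *
          (starRingEnd ℂ) (Complex.exp (-2 * Real.pi * Complex.I * lam' * x)) ∂μ)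
        = if lam = lam' then 1 else 0) ∧
      (∀ f : ℝ → ℂ, MemLp f 2 μ →
        (∀ lam ∈ Λ, (∫ x : ℝ, f x *
            (starRingEnd ℂ) (Complex.exp (-2 * Real.pi * Complex.I * lam * x)) ∂μ) = 0) →
        f =ᵐ[μ] 0)) := by
  classical
  constructor
  · -- forward direction
    intro hQ
    have honb' : ∀ lam ∈ Λ, ∀ lam' ∈ Λ,
        muHat μ (lam - lam') = if lam = lam' then 1 else 0 := by
      intro lam hlam lam' hlam'
      rcases eq_or_ne lam lam' with h | h
      · simp [h, muHat_zero]
      · rw [if_neg h]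
        have h1 := hQ (-lam')
        have hterm : ‖muHat μ (-lam' + ((⟨lam', hlam'⟩ : Λ) : ℝ))‖ ^ 2 = 1 := by
          simp [muHat_zero (μ := μ)]
        have hz := term_eq_zero (f := fun l : Λ => ‖muHat μ (-lam' + (l : ℝ))‖ ^ 2)
          (fun i => by positivity) h1
          (i0 := ⟨lam', hlam'⟩) (i := ⟨lam, hlam⟩)
          (fun hh => h (by simpa [Subtype.ext_iff] using hh)) hterm
        have hz' : ‖muHat μ (-lam' + lam)‖ ^ 2 = 0 := hz
        have hnorm : ‖muHat μ (-lam' + lam)‖ = 0 :=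
          pow_eq_zero_iff (by norm_num) |>.mp hz' 
        have : muHat μ (-lam' + lam) = 0 := norm_eq_zero.mp hnorm
        rwa [show lam - lam' = -lam' + lam by ring]
    have horth : Orthonormal ℂ (fun lam : Λ => EL μ (lam : ℝ)) := orth_of_muHat honb'
    refine ⟨?_, ?_⟩
    · intro lam hlam lam' hlam'
      have hi : (∫ x : ℝ, Complex.exp (-2 * Real.pi * Complex.I * lam * x) *
          (starRingEnd ℂ) (Complex.exp (-2 * Real.pi * Complex.I * lam' * x)) ∂μ)
          = muHat μ (lam - lam') := integral_ee lam lam'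
      rw [hi]
      exact honb' lam hlam lam' hlam'
    · intro f hf hzero
      have hdense : (Submodule.span ℂ
          (Set.range (fun lam : Λ => EL μ (lam : ℝ)))).topologicalClosure = ⊤ := by
        rw [eq_top_iff]
        have hsub : Submodule.span ℂ (Set.range (EL μ)) ≤
            (Submodule.span ℂ (Set.range (fun lam : Λ => EL μ (lam : ℝ)))).topologicalClosure := by
          rw [Submodule.span_le]
          rintro _ ⟨ξ, rfl⟩
          exact EL_mem_closure hQ horth ξ
        calc (⊤ : Submodule ℂ (Lp ℂ 2 μ))
            = (Submodule.span ℂ (Set.range (EL μ))).topologicalClosure :=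
              (span_EL_dense hK hμK).symm
          _ ≤ ((Submodule.span ℂ (Set.range (fun lam : Λ =>
                EL μ (lam : ℝ)))).topologicalClosure).topologicalClosure :=
              Submodule.topologicalClosure_mono hsub
          _ = _ := (Submodule.isClosed_topologicalClosure _).submodule_topologicalClosure_eq
      have hbot : (Submodule.span ℂ (Set.range (fun lam : Λ => EL μ (lam : ℝ))))ᗮ = ⊥ :=
        Submodule.topologicalClosure_eq_top_iff.mp hdense
      have hmem : hf.toLp f ∈ (Submodule.span ℂ
          (Set.range (fun lam : Λ => EL μ (lam : ℝ))))ᗮ := by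
        rw [Submodule.mem_orthogonal]
        intro u hu
        induction hu using Submodule.span_induction with
        | mem u hu =>
          obtain ⟨lam, rfl⟩ := hu
          have := inner_toLp (μ := μ) (lam : ℝ) f hf
          rw [show ⟪(fun lam : Λ => EL μ (lam : ℝ)) lam, MemLp.toLp f hf⟫_ℂ
            = ⟪EL μ (lam : ℝ), MemLp.toLp f hf⟫_ℂ from rfl, this]
          exact hzero lam lam.2
        | zero => exact inner_zero_left _
        | add u v hu hv ihu ihv => rw [inner_add_left, ihu, ihv, add_zero]
        | smul c u hu ih => rw [inner_smul_left, ih, mul_zero]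
      rw [hbot, Submodule.mem_bot] at hmem
      calc f =ᵐ[μ] (hf.toLp f : ℝ → ℂ) := hf.coeFn_toLp.symm
        _ =ᵐ[μ] (0 : Lp ℂ 2 μ) := by rw [hmem]
        _ =ᵐ[μ] 0 := Lp.coeFn_zero ℂ 2 μ
  · -- backward direction
    rintro ⟨horthI, hcomp⟩ ξ
    have honb' : ∀ lam ∈ Λ, ∀ lam' ∈ Λ,
        muHat μ (lam - lam') = if lam = lam' then 1 else 0 := by
      intro lam hlam lam' hlam'
      rw [← integral_ee (μ := μ) lam lam']
      exact horthI lam hlam lam' hlam'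
    have horth : Orthonormal ℂ (fun lam : Λ => EL μ (lam : ℝ)) := orth_of_muHat honb'
    have hbot : (Submodule.span ℂ (Set.range (fun lam : Λ => EL μ (lam : ℝ))))ᗮ = ⊥ := by
      rw [Submodule.eq_bot_iff]
      intro F hF
      have hzero : ∀ lam ∈ Λ, (∫ x, (F : ℝ → ℂ) x * conj (efun lam x) ∂μ) = 0 := by
        intro lam hlam
        rw [← inner_EL]
        exact (Submodule.mem_orthogonal _ _).mp hF _
          (Submodule.subset_span ⟨⟨lam, hlam⟩, rfl⟩)
      have hae := hcomp (F : ℝ → ℂ) (Lp.memLp F) hzero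
      exact Lp.eq_zero_iff_ae_eq_zero.mpr hae
    let b : HilbertBasis Λ ℂ (Lp ℂ 2 μ) := HilbertBasis.mkOfOrthogonalEqBot horth hbot
    have hb : ⇑b = fun lam : Λ => EL μ (lam : ℝ) :=
      HilbertBasis.coe_mkOfOrthogonalEqBot horth hbot
    have hpars := parseval_sq b (EL μ (-ξ))
    rw [norm_EL_sq] at hpars
    rw [← hpars]
    refine tsum_congr fun lam => ?_
    rw [hb]
    show ‖muHat μ (ξ + lam)‖ ^ 2 = ‖⟪EL μ (lam : ℝ), EL μ (-ξ)⟫_ℂ‖ ^ 2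
    rw [inner_EL_EL, show -ξ - (lam : ℝ) = -(ξ + lam) by ring, muHat_neg, RCLike.norm_conj]
end

section
/- Let {d_n} be integers ≥ 2 and {r_n} positive reals with r_n d_n ≤ 1, and let E(R,D) = ⋂_{n≥0}⋃_{δ∈Σ^n} J_δ be the homogeneous Cantor set built from nested intervals where each J_δ at level n splits into d_{n+1} equally spaced subintervals of length r_{n+1}|J_δ| aligned with both endpoints. Then dim_H(E(R,D)) = liminf_{n→∞} (∑_{j=1}^n ln d_j)/(∑_{j=1}^n ln(1/r_j)). -/
open Filter Set MeasureTheory Topology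
open scoped NNReal ENNReal

noncomputable section
namespace Stmt19

variable (d : ℕ → ℕ) (r : ℕ → ℝ)

def NN (n : ℕ) : ℕ := ∏ j ∈ Finset.range n, d j
def ll (n : ℕ) : ℝ := ∏ j ∈ Finset.range n, r j
def st (n : ℕ) : ℝ := ll r n * (r n + (1 - d n * r n) / (d n - 1))
def kk (m : ℕ) (x : ℝ) : ℕ := (⌊x * NN d m⌋).toNat
def dg (j : ℕ) (x : ℝ) : ℕ := kk d (j+1) x - d j * kk d j x
def LL (m : ℕ) (x : ℝ) : ℝ := ∑ j ∈ Finset.range m, (dg d j x : ℝ) * st d r j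
def gg (x : ℝ) : ℝ := ∑' j, (dg d j x : ℝ) * st d r j

lemma ll_pos (hr : ∀ n, 0 < r n) (n : ℕ) : 0 < ll r n := Finset.prod_pos (fun j _ => hr j)

lemma ll_succ (n : ℕ) : ll r (n+1) = ll r n * r n := Finset.prod_range_succ _ _

lemma ll_zero : ll r 0 = 1 := by simp [ll]

lemma hd2 (hd : ∀ n, 2 ≤ d n) (n : ℕ) : (2:ℝ) ≤ (d n : ℝ) := by exact_mod_cast hd n

lemma r_le_half (hd : ∀ n, 2 ≤ d n) (hr : ∀ n, 0 < r n) (hrd : ∀ n, r n * d n ≤ 1) (n : ℕ) :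
    r n ≤ 1/2 := by nlinarith [hrd n, hd2 d hd n, hr n]

lemma r_le_one (hd : ∀ n, 2 ≤ d n) (hr : ∀ n, 0 < r n) (hrd : ∀ n, r n * d n ≤ 1) (n : ℕ) :
    r n ≤ 1 := le_trans (r_le_half d r hd hr hrd n) (by norm_num)

lemma ll_le_one (hr : ∀ n, 0 < r n) (hr1 : ∀ k, r k ≤ 1) (n : ℕ) : ll r n ≤ 1 := by
  induction n with
  | zero => simp [ll]
  | succ k ih => rw [ll_succ]; nlinarith [hr k, ll_pos r hr k, hr1 k]

lemma ll_le_pow (hd : ∀ n, 2 ≤ d n) (hr : ∀ n, 0 < r n) (hrd : ∀ n, r n * d n ≤ 1) (n : ℕ) :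
    ll r n ≤ (1/2)^n := by
  induction n with
  | zero => simp [ll]
  | succ k ih =>
    rw [ll_succ, pow_succ]
    nlinarith [hr k, ll_pos r hr k, r_le_half d r hd hr hrd k]

lemma ll_anti (hr : ∀ n, 0 < r n) (hr1 : ∀ k, r k ≤ 1) {m n : ℕ} (h : m ≤ n) :
    ll r n ≤ ll r m := by
  induction n with
  | zero => simp_all
  | succ k ih =>
    rcases Nat.lt_or_ge m (k+1) with h'|h'
    · have := ih (Nat.lt_succ_iff.mp h')
      rw [ll_succ]
      nlinarith [ll_pos r hr k, hr1 k, hr k]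
    · have : m = k + 1 := le_antisymm h h'
      simp [this]

lemma ll_tendsto (hd : ∀ n, 2 ≤ d n) (hr : ∀ n, 0 < r n) (hrd : ∀ n, r n * d n ≤ 1) :
    Tendsto (ll r) atTop (𝓝 0) := by
  have h1 : Tendsto (fun n : ℕ => ((1:ℝ)/2)^n) atTop (𝓝 0) := by
    apply tendsto_pow_atTop_nhds_zero_of_lt_one <;> norm_num
  exact squeeze_zero (fun n => (ll_pos r hr n).le) (fun n => ll_le_pow d r hd hr hrd n) h1

lemma st_eq (hd : ∀ n, 2 ≤ d n) (n : ℕ) :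
    st d r n = ll r n * ((1 - r n)/((d n:ℝ) - 1)) := by
  have h := hd2 d hd n
  have hne : (d n : ℝ) - 1 ≠ 0 := by linarith
  have hq : r n + (1 - d n * r n)/((d n:ℝ) - 1) = (1 - r n)/((d n:ℝ) - 1) := by
    field_simp; ring
  rw [st, hq]

lemma st_key (hd : ∀ n, 2 ≤ d n) (n : ℕ) :
    ((d n:ℝ) - 1) * st d r n = ll r n * (1 - r n) := by
  have h := hd2 d hd n
  have hne : (d n : ℝ) - 1 ≠ 0 := by linarith
  rw [st_eq d r hd]
  field_simp

lemma st_pos (hd : ∀ n, 2 ≤ d n) (hr : ∀ n, 0 < r n) (hrd : ∀ n, r n * d n ≤ 1) (n : ℕ) :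
    0 < st d r n := by
  rw [st_eq d r hd]
  have h := hd2 d hd n
  have h2 := r_le_half d r hd hr hrd n
  have h3 := ll_pos r hr n
  have h4 : (0:ℝ) < (d n : ℝ) - 1 := by linarith
  have h5 : (0:ℝ) < 1 - r n := by linarith
  exact mul_pos h3 (div_pos h5 h4)

lemma st_mul (hd : ∀ n, 2 ≤ d n) (n : ℕ) :
    ((d n:ℝ) - 1) * st d r n = ll r n - ll r (n+1) := by
  rw [st_key d r hd, ll_succ]; ring

lemma ll_succ_le_st (hd : ∀ n, 2 ≤ d n) (hr : ∀ n, 0 < r n) (hrd : ∀ n, r n * d n ≤ 1) (n : ℕ) :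
    ll r (n+1) ≤ st d r n := by
  have h := hd2 d hd n
  have h3 := ll_pos r hr n
  have key := st_key d r hd n
  have := hrd n
  rw [ll_succ]
  nlinarith [hr n, st_pos d r hd hr hrd n]

lemma ll_le_two_d_st (hd : ∀ n, 2 ≤ d n) (hr : ∀ n, 0 < r n) (hrd : ∀ n, r n * d n ≤ 1) (n : ℕ) :
    ll r n ≤ 2 * d n * st d r n := by
  have h := hd2 d hd n
  have h2 := r_le_half d r hd hr hrd n
  have h3 := ll_pos r hr n
  have key := st_key d r hd n
  nlinarith [st_pos d r hd hr hrd n]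

lemma st_le_ll (hd : ∀ n, 2 ≤ d n) (hr : ∀ n, 0 < r n) (hrd : ∀ n, r n * d n ≤ 1) (n : ℕ) :
    st d r n ≤ ll r n := by
  have h := hd2 d hd n
  have h3 := ll_pos r hr n
  have key := st_key d r hd n
  nlinarith [st_pos d r hd hr hrd n, hr n]

-- digits
lemma NN_pos (hd : ∀ n, 2 ≤ d n) (n : ℕ) : 0 < NN d n :=
  Finset.prod_pos (fun j _ => lt_of_lt_of_le (by norm_num) (hd j))

lemma NN_succ (n : ℕ) : NN d (n+1) = NN d n * d n := Finset.prod_range_succ _ _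

lemma NN_ge (hd : ∀ n, 2 ≤ d n) (n : ℕ) : 2^n ≤ NN d n := by
  induction n with
  | zero => simp [NN]
  | succ k ih =>
    rw [NN_succ, pow_succ]
    exact Nat.mul_le_mul ih (hd k)

lemma kk_neg {x : ℝ} (hx : x < 0) (hd : ∀ n, 2 ≤ d n) (m : ℕ) : kk d m x = 0 := by
  have h1 : (0:ℝ) < NN d m := by exact_mod_cast NN_pos d hd m
  have : x * NN d m < 0 := mul_neg_of_neg_of_pos hx h1
  have : ⌊x * NN d m⌋ < 0 := Int.floor_lt.2 (by simpa using this)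
  simp [kk, Int.toNat_of_nonpos this.le]

lemma kk_cast {x : ℝ} (hx : 0 ≤ x) (m : ℕ) : (kk d m x : ℝ) = ⌊x * NN d m⌋ := by
  have h0 : (0:ℝ) ≤ x * NN d m := by positivity
  have h1 : (0:ℤ) ≤ ⌊x * NN d m⌋ := Int.floor_nonneg.2 h0
  have h2 := Int.toNat_of_nonneg h1
  rw [kk]
  exact_mod_cast congrArg (Int.cast : ℤ → ℝ) h2

lemma kk_le (hx : 0 ≤ x) (m : ℕ) : (kk d m x : ℝ) ≤ x * NN d m := by
  rw [kk_cast d hx]; exact Int.floor_le _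

lemma kk_gt (hx : 0 ≤ x) (m : ℕ) : x * NN d m < kk d m x + 1 := by
  rw [kk_cast d hx]; exact Int.lt_floor_add_one _

lemma kk_rec {x : ℝ} (hx : 0 ≤ x) (hd : ∀ n, 2 ≤ d n) (m : ℕ) :
    d m * kk d m x ≤ kk d (m+1) x ∧ kk d (m+1) x < d m * kk d m x + d m := by
  have hdm : 0 < d m := lt_of_lt_of_le (by norm_num) (hd m)
  have h1 : (kk d (m+1) x : ℝ) ≤ x * NN d (m+1) := kk_le d hx (m+1)
  have h2 : x * NN d (m+1) < kk d (m+1) x + 1 := kk_gt d hx (m+1)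
  have h3 : (kk d m x : ℝ) ≤ x * NN d m := kk_le d hx m
  have h4 : x * NN d m < kk d m x + 1 := kk_gt d hx m
  have hN : (NN d (m+1) : ℝ) = NN d m * d m := by rw [NN_succ]; push_cast; ring
  constructor
  · -- d m * kk m ≤ kk (m+1) : since (d m * kk m : ℝ) ≤ x * NN (m+1), and kk (m+1) = ⌊⌋
    have : ((d m * kk d m x : ℕ) : ℝ) ≤ x * NN d (m+1) := by
      push_cast
      rw [hN, ← mul_assoc]
      have : (0:ℝ) ≤ (d m : ℝ) := by positivity
      nlinarith
    -- so d m * kk m ≤ ⌊x*NN (m+1)⌋ = kk (m+1)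
    have h5 : ((d m * kk d m x : ℕ) : ℤ) ≤ ⌊x * NN d (m+1)⌋ := Int.le_floor.2 (by exact_mod_cast this)
    have h6 : (kk d (m+1) x : ℤ) = ⌊x * NN d (m+1)⌋ := by
      have h0 : (0:ℝ) ≤ x * NN d (m+1) := by positivity
      simp [kk, Int.toNat_of_nonneg (Int.floor_nonneg.2 h0)]
    exact_mod_cast h5.trans_eq h6.symm
  · -- kk (m+1) ≤ x*NN(m+1) = (x*NN m)*d m < (kk m + 1)*d m
    have : (kk d (m+1) x : ℝ) < d m * kk d m x + d m := by
      calc (kk d (m+1) x : ℝ) ≤ x * NN d (m+1) := h1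
      _ = (x * NN d m) * d m := by rw [hN]; ring
      _ < (kk d m x + 1) * d m := by
          have : (0:ℝ) < (d m : ℝ) := by exact_mod_cast hdm
          nlinarith
      _ = d m * kk d m x + d m := by ring
    exact_mod_cast this

lemma kk_succ_eq {x : ℝ} (hx : 0 ≤ x) (hd : ∀ n, 2 ≤ d n) (m : ℕ) :
    kk d (m+1) x = d m * kk d m x + dg d m x := by
  have := (kk_rec d hx hd m).1
  simp [dg, Nat.add_sub_cancel' this]

lemma dg_lt (hd : ∀ n, 2 ≤ d n) (m : ℕ) (x : ℝ) : dg d m x < d m := by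
  rcases lt_or_ge x 0 with hx|hx
  · simp [dg, kk_neg d hx hd]
    exact lt_of_lt_of_le (by norm_num) (hd m)
  · have h1 := (kk_rec d hx hd m).1
    have h2 := (kk_rec d hx hd m).2
    simp only [dg]
    omega

lemma kk_div {x : ℝ} (hx : 0 ≤ x) (hd : ∀ n, 2 ≤ d n) (m : ℕ) :
    kk d m x = kk d (m+1) x / d m := by
  have hdm : 0 < d m := lt_of_lt_of_le (by norm_num) (hd m)
  rw [kk_succ_eq d hx hd m]
  rw [Nat.mul_add_div hdm]
  have h1 := dg_lt d hd m x
  have h2 : dg d m x / d m = 0 := Nat.div_eq_of_lt h1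
  omega

lemma kk_mono {u v : ℝ} (huv : u ≤ v) (m : ℕ) : kk d m u ≤ kk d m v := by
  have : ⌊u * NN d m⌋ ≤ ⌊v * NN d m⌋ := by
    apply Int.floor_le_floor
    have : (0:ℝ) ≤ (NN d m : ℝ) := by positivity
    nlinarith
  simp only [kk]
  omega

lemma kk_eq_of {u v : ℝ} (hu : 0 ≤ u) (hv : 0 ≤ v) (hd : ∀ n, 2 ≤ d n) {j m : ℕ} (hjm : j ≤ m)
    (h : kk d m u = kk d m v) : kk d j u = kk d j v := by
  induction m with
  | zero => have : j = 0 := Nat.le_zero.mp hjm; simp [this, h]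
  | succ k ih =>
    rcases Nat.lt_or_ge j (k+1) with h'|h'
    · apply ih (Nat.lt_succ_iff.mp h')
      rw [kk_div d hu hd k, kk_div d hv hd k, h]
    · have : j = k + 1 := le_antisymm hjm h'
      simp [this, h]

lemma dg_eq_of {u v : ℝ} (hu : 0 ≤ u) (hv : 0 ≤ v) (hd : ∀ n, 2 ≤ d n) {m : ℕ}
    (h : kk d m u = kk d m v) {j : ℕ} (hj : j < m) : dg d j u = dg d j v := by
  have h1 : kk d (j+1) u = kk d (j+1) v := kk_eq_of d hu hv hd hj h
  have h2 : kk d j u = kk d j v := kk_eq_of d hu hv hd (le_of_lt (Nat.lt_of_succ_le hj)) h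
  simp [dg, h1, h2]

lemma sub_lt_kk {u v : ℝ} (hu : 0 ≤ u) (huv : u ≤ v) (hd : ∀ n, 2 ≤ d n) (m : ℕ) :
    (v - u) * NN d m < (kk d m v : ℝ) - kk d m u + 1 := by
  have hv : 0 ≤ v := hu.trans huv
  have h1 := kk_le d hu m
  have h2 := kk_gt d hv m
  nlinarith

lemma kk_zero_of (hd : ∀ n, 2 ≤ d n) {x : ℝ} (hx : 0 ≤ x) (hx1 : x < 1) : kk d 0 x = 0 := by
  have h1 : NN d 0 = 1 := by simp [NN]
  have h2 : ⌊x⌋ = 0 := Int.floor_eq_zero_iff.2 ⟨hx, hx1⟩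
  simp [kk, h1, h2]



-- series and g
lemma sum_dst (hd : ∀ n, 2 ≤ d n) (m : ℕ) :
    ∑ j ∈ Finset.range m, ((d j:ℝ) - 1) * st d r j = 1 - ll r m := by
  induction m with
  | zero => simp [ll_zero]
  | succ k ih =>
    rw [Finset.sum_range_succ, ih, st_mul d r hd]
    ring

lemma term_nonneg (hd : ∀ n, 2 ≤ d n) (hr : ∀ n, 0 < r n) (hrd : ∀ n, r n * d n ≤ 1)
    (j : ℕ) (x : ℝ) : 0 ≤ (dg d j x : ℝ) * st d r j :=
  mul_nonneg (by positivity) (st_pos d r hd hr hrd j).le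

lemma term_le (hd : ∀ n, 2 ≤ d n) (hr : ∀ n, 0 < r n) (hrd : ∀ n, r n * d n ≤ 1)
    (j : ℕ) (x : ℝ) : (dg d j x : ℝ) * st d r j ≤ ((d j:ℝ) - 1) * st d r j := by
  apply mul_le_mul_of_nonneg_right _ (st_pos d r hd hr hrd j).le
  have := dg_lt d hd j x
  have : (dg d j x : ℝ) ≤ (d j : ℝ) - 1 := by
    have h2 : dg d j x + 1 ≤ d j := this
    have : ((dg d j x : ℕ):ℝ) + 1 ≤ (d j : ℝ) := by exact_mod_cast h2
    linarith
  exact this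

lemma summable_term (hd : ∀ n, 2 ≤ d n) (hr : ∀ n, 0 < r n) (hrd : ∀ n, r n * d n ≤ 1)
    (x : ℝ) : Summable (fun j => (dg d j x : ℝ) * st d r j) := by
  apply summable_of_sum_range_le (term_nonneg d r hd hr hrd · x)
  intro n
  calc ∑ j ∈ Finset.range n, (dg d j x : ℝ) * st d r j
      ≤ ∑ j ∈ Finset.range n, ((d j:ℝ) - 1) * st d r j :=
        Finset.sum_le_sum (fun j _ => term_le d r hd hr hrd j x)
    _ = 1 - ll r n := sum_dst d r hd n
    _ ≤ 1 := by linarith [ll_pos r hr n]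

lemma hasSum_tail (hd : ∀ n, 2 ≤ d n) (hr : ∀ n, 0 < r n) (hrd : ∀ n, r n * d n ≤ 1)
    (m : ℕ) : HasSum (fun j => ((d (j+m):ℝ) - 1) * st d r (j+m)) (ll r m) := by
  rw [hasSum_iff_tendsto_nat_of_nonneg]
  · have key : ∀ M, ∑ j ∈ Finset.range M, ((d (j+m):ℝ) - 1) * st d r (j+m)
        = ll r m - ll r (M+m) := by
      intro M
      induction M with
      | zero => simp
      | succ k ih =>
        rw [Finset.sum_range_succ, ih, st_mul d r hd]
        have e : k + 1 + m = (k + m) + 1 := by omega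
        rw [e]
        ring
    simp only [key]
    have h1 : Tendsto (fun M : ℕ => ll r (M + m)) atTop (𝓝 0) :=
      (ll_tendsto d r hd hr hrd).comp (tendsto_add_atTop_nat m)
    have := Tendsto.const_sub (ll r m) h1
    simpa using this
  · intro j
    have h1 := st_pos d r hd hr hrd (j+m)
    have h2 := hd2 d hd (j+m)
    nlinarith

lemma gg_sub_LL (hd : ∀ n, 2 ≤ d n) (hr : ∀ n, 0 < r n) (hrd : ∀ n, r n * d n ≤ 1)
    {x : ℝ} (m : ℕ) :
    0 ≤ gg d r x - LL d r m x ∧ gg d r x - LL d r m x ≤ ll r m := by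
  have hs := summable_term d r hd hr hrd x
  have hsplit := Summable.sum_add_tsum_nat_add m hs
  have hs2 : Summable (fun j => (dg d (j+m) x : ℝ) * st d r (j+m)) :=
    ((summable_nat_add_iff m).2 hs)
  have htail : gg d r x - LL d r m x = ∑' j, (dg d (j+m) x : ℝ) * st d r (j+m) := by
    rw [gg, LL]
    rw [← hsplit]
    ring
  rw [htail]
  constructor
  · exact tsum_nonneg (fun j => term_nonneg d r hd hr hrd (j+m) x)
  · have := (hasSum_tail d r hd hr hrd m).tsum_eq
    rw [← this]
    exact Summable.tsum_le_tsum (fun j => term_le d r hd hr hrd (j+m) x) hs2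
      (hasSum_tail d r hd hr hrd m).summable

-- Q lemma
lemma Qlem (hd : ∀ n, 2 ≤ d n) (hr : ∀ n, 0 < r n) (hrd : ∀ n, r n * d n ≤ 1)
    {u v : ℝ} (hu : 0 ≤ u) (huv : u ≤ v) (hv : v < 1) (m : ℕ) :
    ((kk d m v : ℝ) - kk d m u) * ll r m ≤ LL d r m v - LL d r m u := by
  induction m with
  | zero =>
    rw [kk_zero_of d hd hu (lt_of_le_of_lt huv hv), kk_zero_of d hd (hu.trans huv) hv]
    simp [LL]
  | succ m ih =>
    have hv0 : 0 ≤ v := hu.trans huv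
    have hdm := hd2 d hd m
    have hℓ := ll_pos r hr m
    have hrm := hr m
    have hrdm := hrd m
    have hst2 : ((d m:ℝ) - 1) * (st d r m - r m * ll r m) = ll r m * (1 - r m * d m) := by
      have := st_key d r hd m
      nlinarith [this]
    have hstr : 0 ≤ st d r m - r m * ll r m := by nlinarith
    have hrecu := kk_succ_eq d hu hd m
    have hrecv := kk_succ_eq d hv0 hd m
    have hKmono : kk d m u ≤ kk d m v := kk_mono d huv m
    have hK1mono : kk d (m+1) u ≤ kk d (m+1) v := kk_mono d huv (m+1)
    have hcastu : (kk d (m+1) u : ℝ) = d m * kk d m u + dg d m u := by exact_mod_cast congrArg (Nat.cast : ℕ → ℝ) hrecu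
    have hcastv : (kk d (m+1) v : ℝ) = d m * kk d m v + dg d m v := by exact_mod_cast congrArg (Nat.cast : ℕ → ℝ) hrecv
    have hLs : LL d r (m+1) v - LL d r (m+1) u
        = (LL d r m v - LL d r m u) + ((dg d m v : ℝ) - dg d m u) * st d r m := by
      simp [LL, Finset.sum_range_succ]; ring
    rw [hLs, ll_succ]
    -- suffices: ΔK1 * (ℓ r) ≤ ΔK ℓ + Δa st, then add IH
    have hsuff : ((kk d (m+1) v : ℝ) - kk d (m+1) u) * (ll r m * r m)
        ≤ ((kk d m v : ℝ) - kk d m u) * ll r m + ((dg d m v : ℝ) - dg d m u) * st d r m := by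
      rcases eq_or_lt_of_le hKmono with hc|hc
      · -- ΔK = 0
        have h0 : (kk d m v : ℝ) = kk d m u := by exact_mod_cast congrArg (Nat.cast : ℕ → ℝ) hc.symm
        have hΔa : (0:ℝ) ≤ (dg d m v : ℝ) - dg d m u := by
          have : (kk d (m+1) u : ℝ) ≤ kk d (m+1) v := by exact_mod_cast hK1mono
          rw [hcastu, hcastv, h0] at this
          linarith
        rw [hcastu, hcastv, h0]
        nlinarith
      · -- ΔK ≥ 1
        have h1 : (1:ℝ) ≤ (kk d m v : ℝ) - kk d m u := by
          have : kk d m u + 1 ≤ kk d m v := hc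
          have := (Nat.cast_le (α := ℝ)).2 this
          push_cast at this
          linarith
        have hΔa : -((d m:ℝ) - 1) ≤ (dg d m v : ℝ) - dg d m u := by
          have h2 : dg d m u < d m := dg_lt d hd m u
          have h3 : (dg d m u : ℝ) ≤ (d m:ℝ) - 1 := by
            have : (dg d m u : ℝ) + 1 ≤ (d m : ℝ) := by exact_mod_cast h2
            linarith
          have : (0:ℝ) ≤ (dg d m v : ℝ) := by positivity
          linarith
        rw [hcastu, hcastv]
        have h1dr : (0:ℝ) ≤ 1 - r m * d m := by linarith
        nlinarith [mul_le_mul_of_nonneg_right hΔa hstr,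
          mul_nonneg (mul_nonneg (by linarith : (0:ℝ) ≤ (kk d m v:ℝ) - kk d m u - 1) hℓ.le) h1dr]
    linarith [ih]

lemma E1 (hd : ∀ n, 2 ≤ d n) (hr : ∀ n, 0 < r n) (hrd : ∀ n, r n * d n ≤ 1)
    {u v : ℝ} (hu : 0 ≤ u) (huv : u ≤ v) (hv : v < 1) (m : ℕ) :
    ((kk d m v : ℝ) - kk d m u) * ll r m - ll r m ≤ gg d r v - gg d r u := by
  have h1 := gg_sub_LL d r hd hr hrd (x := v) m
  have h2 := gg_sub_LL d r hd hr hrd (x := u) m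
  have h3 := Qlem d r hd hr hrd hu huv hv m
  linarith [h1.1, h2.2]

lemma E2 (hd : ∀ n, 2 ≤ d n) (hr : ∀ n, 0 < r n) (hrd : ∀ n, r n * d n ≤ 1)
    {u v : ℝ} (hu : 0 ≤ u) (huv : u ≤ v) (hv : v < 1) (m : ℕ)
    (hK : kk d m v ≤ kk d m u + 1) :
    ((kk d (m+1) v : ℝ) - kk d (m+1) u - 1) * st d r m - ll r (m+1) ≤ gg d r v - gg d r u := by
  have hv0 : 0 ≤ v := hu.trans huv
  have h1 := gg_sub_LL d r hd hr hrd (x := v) (m+1)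
  have h2 := gg_sub_LL d r hd hr hrd (x := u) (m+1)
  have hst := st_pos d r hd hr hrd m
  have hrecu := kk_succ_eq d hu hd m
  have hrecv := kk_succ_eq d hv0 hd m
  have hcastu : (kk d (m+1) u : ℝ) = d m * kk d m u + dg d m u := by exact_mod_cast congrArg (Nat.cast : ℕ → ℝ) hrecu
  have hcastv : (kk d (m+1) v : ℝ) = d m * kk d m v + dg d m v := by exact_mod_cast congrArg (Nat.cast : ℕ → ℝ) hrecv
  have hLs : LL d r (m+1) v - LL d r (m+1) u
      = (LL d r m v - LL d r m u) + ((dg d m v : ℝ) - dg d m u) * st d r m := by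
    simp [LL, Finset.sum_range_succ]; ring
  have hKmono : kk d m u ≤ kk d m v := kk_mono d huv m
  rcases eq_or_lt_of_le hKmono with hc|hc
  · -- same level-m cell
    have hLeq : LL d r m v = LL d r m u := by
      apply Finset.sum_congr rfl
      intro j hj
      rw [dg_eq_of d hv0 hu hd hc.symm (Finset.mem_range.mp hj)]
    have h0 : (kk d m v : ℝ) = kk d m u := by exact_mod_cast congrArg (Nat.cast : ℕ → ℝ) hc.symm
    have : ((kk d (m+1) v : ℝ) - kk d (m+1) u) * st d r m
        = ((dg d m v : ℝ) - dg d m u) * st d r m := by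
      rw [hcastu, hcastv, h0]; ring
    nlinarith [h1.1, h2.2]
  · -- adjacent cells : kk m v = kk m u + 1
    have hc2 : kk d m v = kk d m u + 1 := le_antisymm hK hc
    have h0 : (kk d m v : ℝ) = kk d m u + 1 := by exact_mod_cast congrArg (Nat.cast : ℕ → ℝ) hc2
    have hQ := Qlem d r hd hr hrd hu huv hv m
    rw [h0] at hQ
    have hmul := st_mul d r hd m
    -- ℓ m = (d-1) st + ℓ (m+1)
    have hΔa : ((dg d m v : ℝ) - dg d m u)
        = ((kk d (m+1) v : ℝ) - kk d (m+1) u) - (d m : ℝ) := by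
      rw [hcastu, hcastv, h0]; ring
    nlinarith [h1.1, h2.2]

-- pair bound
set_option maxHeartbeats 2000000 in
lemma pair (hd : ∀ n, 2 ≤ d n) (hr : ∀ n, 0 < r n) (hrd : ∀ n, r n * d n ≤ 1)
    {s ρ u v : ℝ} {n : ℕ} (hs0 : 0 ≤ s) (hs1 : s ≤ 1)
    (hN1 : (1:ℝ) ≤ NN d n * ll r n ^ s)
    (hN2 : (1:ℝ) ≤ NN d (n+1) * ll r (n+1) ^ s)
    (hρ1 : ll r (n+1) ≤ ρ) (hρ2 : ρ ≤ ll r n)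
    (hu : 0 ≤ u) (huv : u ≤ v) (hv : v < 1)
    (hg : gg d r v - gg d r u ≤ 2 * ρ) :
    v - u ≤ 18 * ρ ^ s := by
  have hl1 : 0 < ll r (n+1) := ll_pos r hr (n+1)
  have hl : 0 < ll r n := ll_pos r hr n
  have hρ0 : 0 < ρ := lt_of_lt_of_le hl1 hρ1
  have hρs : 0 < ρ ^ s := Real.rpow_pos_of_pos hρ0 s
  have hN0 : (0:ℝ) < NN d n := by exact_mod_cast NN_pos d hd n
  have hN10 : (0:ℝ) < NN d (n+1) := by exact_mod_cast NN_pos d hd (n+1)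
  have hls : 0 < ll r n ^ s := Real.rpow_pos_of_pos hl s
  have hls1 : 0 < ll r (n+1) ^ s := Real.rpow_pos_of_pos hl1 s
  -- key: ρ ≤ ρ^s * (ll r n * NN d n)
  have hkey : ρ ≤ ρ ^ s * (ll r n * NN d n) := by
    have e1 : ρ = ρ ^ s * ρ ^ (1 - s) := by
      rw [← Real.rpow_add hρ0]; norm_num
    have e2 : ρ ^ (1-s) ≤ ll r n ^ (1-s) :=
      Real.rpow_le_rpow hρ0.le hρ2 (by linarith)
    have e4 : ll r n / ll r n ^ s ≤ ll r n * NN d n := by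
      rw [div_le_iff₀ hls]
      nlinarith
    calc ρ = ρ^s * ρ^(1-s) := e1
    _ ≤ ρ^s * ll r n ^ (1-s) := mul_le_mul_of_nonneg_left e2 hρs.le
    _ = ρ^s * (ll r n / ll r n ^ s) := by rw [Real.rpow_sub hl, Real.rpow_one]
    _ ≤ ρ^s * (ll r n * NN d n) := mul_le_mul_of_nonneg_left e4 hρs.le
  -- 1/N(n+1) ≤ ρ^s
  have h1N2 : (1:ℝ) ≤ ρ ^ s * NN d (n+1) := by
    have e5 : ll r (n+1) ^ s ≤ ρ ^ s := Real.rpow_le_rpow hl1.le hρ1 hs0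
    nlinarith
  obtain ⟨a0, ha0⟩ : ∃ a0 : ℝ, a0 = (kk d n v : ℝ) - kk d n u := ⟨_, rfl⟩
  have ha0nn : 0 ≤ a0 := by
    have h := kk_mono d huv n
    have h2 : (kk d n u : ℝ) ≤ kk d n v := by exact_mod_cast h
    rw [ha0]; linarith
  have hE1' : (a0 - 1) * ll r n ≤ 2 * ρ := by
    have hq := E1 d r hd hr hrd hu huv hv n
    nlinarith [hq, hg, ha0]
  have hsub : (v - u) * NN d n < a0 + 1 := by rw [ha0]; exact sub_lt_kk d hu huv hd n
  rcases le_or_gt 2 a0 with h2|h2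
  · -- far case at level n
    have e6 : a0 + 1 ≤ 3 * (a0 - 1) := by linarith
    have e7 : (v - u) * NN d n * ll r n ≤ 6 * ρ := by
      nlinarith [mul_lt_mul_of_pos_right hsub hl, mul_le_mul_of_nonneg_right e6 hl.le, hE1']
    have hvu : v - u ≤ 6 * ρ^s := by
      nlinarith [mul_pos hN0 hl, e7, hkey]
    linarith
  · -- kk n v ≤ kk n u + 1
    have hKn : kk d n v ≤ kk d n u + 1 := by
      by_contra hcon
      push_neg at hcon
      have : ((kk d n u : ℕ) : ℝ) + 2 ≤ ((kk d n v : ℕ) : ℝ) := by exact_mod_cast hcon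
      nlinarith [ha0, h2]
    obtain ⟨a1, ha1⟩ : ∃ a1 : ℝ, a1 = (kk d (n+1) v : ℝ) - kk d (n+1) u := ⟨_, rfl⟩
    have ha1nn : 0 ≤ a1 := by
      have h := kk_mono d huv (n+1)
      have h2 : (kk d (n+1) u : ℝ) ≤ kk d (n+1) v := by exact_mod_cast h
      rw [ha1]; linarith
    have hE2' : (a1 - 1) * st d r n ≤ 3 * ρ := by
      have hq := E2 d r hd hr hrd hu huv hv n hKn
      rw [← ha1] at hq
      linarith
    have hsub1 : (v - u) * NN d (n+1) < a1 + 1 := by rw [ha1]; exact sub_lt_kk d hu huv hd (n+1)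
    rcases le_or_gt a1 3 with h3|h3
    · -- few cells
      have h4 : (v - u) * NN d (n+1) ≤ 4 := by linarith
      have hvu0 : 0 ≤ v - u := by linarith
      have e9 : v - u ≤ 4 * ρ^s := by nlinarith [h4, h1N2, hN10]
      linarith
    · -- many cells: use spacing
      have hst := st_pos d r hd hr hrd n
      have hstN : ll r n ≤ 2 * d n * st d r n := ll_le_two_d_st d r hd hr hrd n
      have hNs : (NN d (n+1) : ℝ) = NN d n * d n := by rw [NN_succ]; push_cast; ring
      have hd0 : (0:ℝ) < d n := by have := hd2 d hd n; linarith
      have e10 : a1 + 1 ≤ 2 * (a1 - 1) := by linarith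
      -- (v-u) * N1 < 2(a1-1) ≤ 6ρ/st
      have e11 : (v - u) * NN d (n+1) * st d r n ≤ 6 * ρ := by
        nlinarith [mul_lt_mul_of_pos_right hsub1 hst, mul_le_mul_of_nonneg_right e10 hst.le, hE2']
      -- st * N1 = st * N * d ≥ ℓ N / 2
      have e12 : ll r n * NN d n ≤ 2 * (st d r n * NN d (n+1)) := by
        rw [hNs]
        nlinarith
      -- so (v-u) * (ℓ N / 2) ≤ 6ρ  => (v-u) ℓ N ≤ 12 ρ ≤ 12 ρ^s ℓ N
      have hvu0 : 0 ≤ v - u := by linarith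
      have e13 : (v - u) * (ll r n * NN d n) ≤ 12 * ρ := by
        nlinarith [mul_le_mul_of_nonneg_left e12 hvu0, e11]
      have hvu : v - u ≤ 12 * ρ^s := by
        nlinarith [mul_pos hN0 hl, e13, hkey]
      linarith

-- measurability & limits
lemma dg_neg {x : ℝ} (hx : x < 0) (hd : ∀ n, 2 ≤ d n) (j : ℕ) : dg d j x = 0 := by
  simp [dg, kk_neg d hx hd]

lemma LL_tendsto_gg (hd : ∀ n, 2 ≤ d n) (hr : ∀ n, 0 < r n) (hrd : ∀ n, r n * d n ≤ 1)
    (x : ℝ) : Tendsto (fun m => LL d r m x) atTop (𝓝 (gg d r x)) := by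
  rcases lt_or_ge x 0 with hx|hx
  · have hdg : ∀ j, dg d j x = 0 := dg_neg d hx hd
    have h1 : ∀ m, LL d r m x = 0 := by
      intro m; rw [LL]; apply Finset.sum_eq_zero; intro j _; simp [hdg j]
    have h2 : gg d r x = 0 := by
      rw [gg]
      convert tsum_zero with j
      simp [hdg j]
    simp only [h1, h2]
    exact tendsto_const_nhds
  · have h0 : Tendsto (fun m => gg d r x - LL d r m x) atTop (𝓝 0) := by
      apply squeeze_zero (fun m => (gg_sub_LL d r hd hr hrd m).1)
        (fun m => (gg_sub_LL d r hd hr hrd m).2)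
      exact ll_tendsto d r hd hr hrd
    have h1 := (tendsto_const_nhds (x := gg d r x) (f := atTop (α := ℕ))).sub h0
    simpa using h1

lemma measurable_kk (m : ℕ) : Measurable (fun x => kk d m x) := by
  apply Measurable.comp (measurable_from_top (α := ℤ))
  exact (measurable_id.mul_const _).floor

lemma measurable_LL (m : ℕ) : Measurable (fun x => LL d r m x) := by
  apply Finset.measurable_sum
  intro j _
  apply Measurable.mul_const
  have h1 : Measurable (fun x => dg d j x) :=
    (measurable_kk d (j+1)).sub ((measurable_kk d j).const_mul (d j))
  exact measurable_from_top.comp h1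

lemma measurable_gg (hd : ∀ n, 2 ≤ d n) (hr : ∀ n, 0 < r n) (hrd : ∀ n, r n * d n ≤ 1) :
    Measurable (gg d r) :=
  measurable_of_tendsto_metrizable (fun m => measurable_LL d r m)
    (tendsto_pi_nhds.2 (LL_tendsto_gg d r hd hr hrd))

lemma gg_inj (hd : ∀ n, 2 ≤ d n) (hr : ∀ n, 0 < r n) (hrd : ∀ n, r n * d n ≤ 1)
    {u v : ℝ} (hu : 0 ≤ u) (huv : u ≤ v) (hv : v < 1) (hgg : gg d r v = gg d r u) :
    u = v := by
  by_contra hne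
  have hlt : 0 < v - u := lt_of_le_of_ne huv (fun h => hne h) |> sub_pos.mpr
  -- choose m with 2 / 2^m < v - u
  obtain ⟨m, hm⟩ : ∃ m : ℕ, (2:ℝ) / 2^m < v - u := by
    obtain ⟨m, hm⟩ := pow_unbounded_of_one_lt (2 / (v-u)) (by norm_num : (1:ℝ) < 2)
    exact ⟨m, by rw [div_lt_iff₀ (by positivity)]; rw [div_lt_iff₀ hlt] at hm; nlinarith⟩
  have hE := E1 d r hd hr hrd hu huv hv m
  rw [hgg] at hE
  have hℓ := ll_pos r hr m
  -- (kk m v - kk m u - 1) * ℓ ≤ 0 => kk m v ≤ kk m u + 1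
  have h1 : (kk d m v : ℝ) - kk d m u ≤ 1 := by nlinarith
  have hsub := sub_lt_kk d hu huv hd m
  have hN : (2:ℝ)^m ≤ NN d m := by exact_mod_cast NN_ge d hd m
  have hNpos : (0:ℝ) < NN d m := by exact_mod_cast NN_pos d hd m
  have : (v - u) * NN d m < 2 := by linarith
  have : (v - u) * 2^m < 2 := by nlinarith
  rw [div_lt_iff₀ (by positivity : (0:ℝ) < 2^m)] at hm
  linarith

-- volume of set with pairwise bounded differences
lemma vol_pairwise {A : Set ℝ} {b : ℝ} (hA : A ⊆ Set.Icc 0 1)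
    (h : ∀ u ∈ A, ∀ v ∈ A, v - u ≤ b) : volume A ≤ ENNReal.ofReal (2*b) := by
  rcases A.eq_empty_or_nonempty with hA0|⟨w, hw⟩
  · simp [hA0]
  · have hsub : A ⊆ Set.Icc (w - b) (w + b) := by
      intro y hy
      exact ⟨by have := h y hy w hw; linarith, by have := h w hw y hy; linarith⟩
    calc volume A ≤ volume (Set.Icc (w-b) (w+b)) := measure_mono hsub
    _ = ENNReal.ofReal ((w+b) - (w-b)) := Real.volume_Icc
    _ = ENNReal.ofReal (2*b) := by ring_nf

-- ball bound
lemma ball_bound (hd : ∀ n, 2 ≤ d n) (hr : ∀ n, 0 < r n) (hrd : ∀ n, r n * d n ≤ 1)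
    {s : ℝ} (hs0 : 0 ≤ s) (hs1 : s ≤ 1) {n₀ : ℕ}
    (hcond : ∀ m, n₀ ≤ m → (1:ℝ) ≤ NN d m * ll r m ^ s)
    (x ρ : ℝ) (hρ : 0 < ρ) :
    ((volume.restrict (Set.Ico (0:ℝ) 1)).map (gg d r)) (Metric.closedBall x ρ)
      ≤ ENNReal.ofReal ((36 / ll r n₀) * ρ ^ s) := by
  have hmeas := measurable_gg d r hd hr hrd
  have hl₀ := ll_pos r hr n₀
  have hρs : 0 < ρ ^ s := Real.rpow_pos_of_pos hρ s
  have hl₀1 : ll r n₀ ≤ 1 := ll_le_one r hr (fun k => r_le_one d r hd hr hrd k) n₀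
  rw [Measure.map_apply hmeas measurableSet_closedBall,
    Measure.restrict_apply (hmeas measurableSet_closedBall)]
  rcases le_or_gt (ll r n₀) ρ with hρℓ|hρℓ
  · -- big radius
    calc volume (gg d r ⁻¹' Metric.closedBall x ρ ∩ Set.Ico 0 1)
        ≤ volume (Set.Ico (0:ℝ) 1) := measure_mono Set.inter_subset_right
      _ = ENNReal.ofReal 1 := by rw [Real.volume_Ico]; norm_num
      _ ≤ ENNReal.ofReal ((36 / ll r n₀) * ρ ^ s) := by
          apply ENNReal.ofReal_le_ofReal
          have e1 : ll r n₀ ^ s ≤ ρ ^ s := Real.rpow_le_rpow hl₀.le hρℓ hs0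
          have e2 : ll r n₀ ≤ ll r n₀ ^ s := by
            have := Real.rpow_le_rpow_of_exponent_ge hl₀ hl₀1 hs1
            rwa [Real.rpow_one] at this
          rw [div_mul_eq_mul_div, le_div_iff₀ hl₀]
          nlinarith
  · -- small radius: find n with ℓ(n+1) ≤ ρ < ℓ n
    have hex : ∃ m, ll r m ≤ ρ := by
      have h1 := (ll_tendsto d r hd hr hrd).eventually (eventually_lt_nhds hρ)
      exact h1.exists.imp (fun m hm => hm.le)
    set M := Nat.find hex with hM
    have hMspec : ll r M ≤ ρ := Nat.find_spec hex
    have hMgt : n₀ < M := by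
      by_contra hcon
      push_neg at hcon
      have := ll_anti r hr (fun k => r_le_one d r hd hr hrd k) hcon
      linarith
    obtain ⟨n, hn⟩ : ∃ n, M = n + 1 := ⟨M - 1, by omega⟩
    have hnn₀ : n₀ ≤ n := by omega
    have hρlt : ρ < ll r n := by
      have := Nat.find_min hex (m := n) (by omega)
      push_neg at this
      exact this
    have hpair : ∀ u ∈ gg d r ⁻¹' Metric.closedBall x ρ ∩ Set.Ico 0 1,
        ∀ v ∈ gg d r ⁻¹' Metric.closedBall x ρ ∩ Set.Ico 0 1, v - u ≤ 18 * ρ ^ s := by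
      intro u hu v hv
      rcases le_or_gt v u with hvu|huv
      · nlinarith
      · obtain ⟨hu1, hu2⟩ := hu
        obtain ⟨hv1, hv2⟩ := hv
        have hgu : |gg d r u - x| ≤ ρ := by
          have := hu1
          simp only [Set.mem_preimage, Metric.mem_closedBall] at this
          rwa [Real.dist_eq] at this
        have hgv : |gg d r v - x| ≤ ρ := by
          have := hv1
          simp only [Set.mem_preimage, Metric.mem_closedBall] at this
          rwa [Real.dist_eq] at this
        have hg2 : gg d r v - gg d r u ≤ 2 * ρ := by
          rw [abs_le] at hgu hgv
          linarith [hgu.1, hgu.2, hgv.1, hgv.2]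
        have := pair d r hd hr hrd hs0 hs1 (hcond n hnn₀) (hcond (n+1) (by omega))
          (by rw [← hn]; exact hMspec) hρlt.le hu2.1 huv.le hv2.2 hg2
        linarith
    calc volume (gg d r ⁻¹' Metric.closedBall x ρ ∩ Set.Ico 0 1)
        ≤ ENNReal.ofReal (2 * (18 * ρ ^ s)) := by
          apply vol_pairwise _ hpair
          exact Set.inter_subset_right.trans Set.Ico_subset_Icc_self
      _ ≤ ENNReal.ofReal ((36 / ll r n₀) * ρ ^ s) := by
          apply ENNReal.ofReal_le_ofReal
          rw [div_mul_eq_mul_div, le_div_iff₀ hl₀]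
          nlinarith

-- mass distribution principle
lemma lower_dim (hd : ∀ n, 2 ≤ d n) (hr : ∀ n, 0 < r n) (hrd : ∀ n, r n * d n ≤ 1)
    {s : ℝ} (hs0 : 0 < s) (hs1 : s ≤ 1) {n₀ : ℕ}
    (hcond : ∀ m, n₀ ≤ m → (1:ℝ) ≤ NN d m * ll r m ^ s)
    {E : Set ℝ} (hgE : ∀ x : ℝ, 0 ≤ x → x < 1 → gg d r x ∈ E) :
    ENNReal.ofReal s ≤ dimH E := by
  have hmeas := measurable_gg d r hd hr hrd
  have hl₀ := ll_pos r hr n₀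
  set μ := (volume.restrict (Set.Ico (0:ℝ) 1)).map (gg d r) with hμ
  set C : ℝ := 36 / ll r n₀ with hC
  have hCpos : 0 < C := by positivity
  have hCne : ENNReal.ofReal C ≠ 0 := by
    simp [ENNReal.ofReal_eq_zero, not_le, hCpos]
  have hCnetop : ENNReal.ofReal C ≠ ⊤ := ENNReal.ofReal_ne_top
  -- singletons are null
  have hsing : ∀ y : ℝ, μ {y} = 0 := by
    intro y
    rw [hμ, Measure.map_apply hmeas (measurableSet_singleton y),
      Measure.restrict_apply (hmeas (measurableSet_singleton y))]
    have hss : (gg d r ⁻¹' {y} ∩ Set.Ico 0 1).Subsingleton := by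
      intro u hu v hv
      rcases le_total u v with h|h
      · exact gg_inj d r hd hr hrd hu.2.1 h hv.2.2
          (by rw [Set.mem_inter_iff, Set.mem_preimage, Set.mem_singleton_iff] at hu hv
              rw [hu.1, hv.1])
      · exact (gg_inj d r hd hr hrd hv.2.1 h hu.2.2
          (by rw [Set.mem_inter_iff, Set.mem_preimage, Set.mem_singleton_iff] at hu hv
              rw [hu.1, hv.1])).symm
    exact hss.measure_zero volume
  -- main estimate for arbitrary small-diameter sets
  have hmain : ∀ t : Set ℝ, EMetric.diam t ≤ 1 →
      μ t ≤ ENNReal.ofReal C * (EMetric.diam t) ^ s := by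
    intro t hdiam
    rcases t.eq_empty_or_nonempty with h0|⟨y, hy⟩
    · simp [h0]
    rcases eq_or_ne (EMetric.diam t) 0 with hD|hD
    · have hss : t.Subsingleton := EMetric.diam_eq_zero_iff.1 hD
      have : t ⊆ {y} := fun z hz => hss hz hy
      calc μ t ≤ μ {y} := measure_mono this
        _ = 0 := hsing y
        _ ≤ _ := zero_le
    · have hDtop : EMetric.diam t ≠ ⊤ := by
        intro h; rw [h] at hdiam; exact absurd hdiam (by simp)
      set ρ := (EMetric.diam t).toReal with hρdef
      have hρpos : 0 < ρ := ENNReal.toReal_pos hD hDtop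
      have hsub : t ⊆ Metric.closedBall y ρ := by
        intro z hz
        rw [Metric.mem_closedBall, dist_edist]
        exact ENNReal.toReal_mono hDtop (EMetric.edist_le_diam_of_mem hz hy)
      calc μ t ≤ μ (Metric.closedBall y ρ) := measure_mono hsub
        _ ≤ ENNReal.ofReal (C * ρ ^ s) := ball_bound d r hd hr hrd hs0.le hs1 hcond y ρ hρpos
        _ = ENNReal.ofReal C * ENNReal.ofReal (ρ ^ s) := ENNReal.ofReal_mul hCpos.le
        _ = ENNReal.ofReal C * (EMetric.diam t) ^ s := by
            rw [← ENNReal.ofReal_rpow_of_pos hρpos, ENNReal.ofReal_toReal hDtop]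
  -- the scaled measure is ≤ Hausdorff measure
  set ν := (ENNReal.ofReal C)⁻¹ • μ with hν
  have hν_le : ν ≤ μH[s] := by
    apply Measure.le_hausdorffMeasure s ν 1 one_pos
    intro t hdiam
    rw [hν]
    simp only [Measure.smul_apply, smul_eq_mul]
    calc (ENNReal.ofReal C)⁻¹ * μ t
        ≤ (ENNReal.ofReal C)⁻¹ * (ENNReal.ofReal C * (EMetric.diam t) ^ s) := by
          exact mul_le_mul_right (hmain t hdiam) _
      _ = (EMetric.diam t) ^ s := by
          rw [← mul_assoc, ENNReal.inv_mul_cancel hCne hCnetop, one_mul]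
  -- μ E ≥ 1
  have hμE : 1 ≤ μ E := by
    have h1 : (volume.restrict (Set.Ico (0:ℝ) 1)) (gg d r ⁻¹' E) ≤ μ E :=
      Measure.le_map_apply hmeas.aemeasurable E
    have h2 : (volume.restrict (Set.Ico (0:ℝ) 1)) (gg d r ⁻¹' E)
        = volume (gg d r ⁻¹' E ∩ Set.Ico 0 1) := Measure.restrict_apply' measurableSet_Ico
    have h3 : gg d r ⁻¹' E ∩ Set.Ico 0 1 = Set.Ico (0:ℝ) 1 := by
      apply Set.inter_eq_self_of_subset_right
      intro z hz
      exact hgE z hz.1 hz.2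
    rw [h2, h3, Real.volume_Ico] at h1
    simpa using h1
  -- conclude
  have hfinal : (ENNReal.ofReal C)⁻¹ ≤ μH[s] E := by
    have h1 : (ENNReal.ofReal C)⁻¹ ≤ ν E := by
      rw [hν]
      simp only [Measure.smul_apply, smul_eq_mul]
      calc (ENNReal.ofReal C)⁻¹ = (ENNReal.ofReal C)⁻¹ * 1 := (mul_one _).symm
        _ ≤ (ENNReal.ofReal C)⁻¹ * μ E := mul_le_mul_right hμE _
    exact h1.trans (Measure.le_iff'.1 hν_le E)
  have hinvpos : 0 < (ENNReal.ofReal C)⁻¹ := ENNReal.inv_pos.2 hCnetop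
  have hne : μH[s] E ≠ 0 := (lt_of_lt_of_le hinvpos hfinal).ne'
  have hcoe : ((s.toNNReal : ℝ≥0) : ℝ) = s := Real.coe_toNNReal s hs0.le
  have := le_dimH_of_hausdorffMeasure_ne_zero (s := E) (d := s.toNNReal) (by rwa [hcoe])
  exact this

-- N * ℓ^s as an exponential
lemma Nls_eq (hd : ∀ n, 2 ≤ d n) (hr : ∀ n, 0 < r n) (s : ℝ) (m : ℕ) :
    (NN d m : ℝ) * ll r m ^ s
      = Real.exp ((∑ j ∈ Finset.range m, Real.log (d j))
          - s * (∑ j ∈ Finset.range m, Real.log (1 / r j))) := by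
  have hNpos : (0:ℝ) < NN d m := by exact_mod_cast NN_pos d hd m
  have hlpos := ll_pos r hr m
  have hlogN : Real.log (NN d m) = ∑ j ∈ Finset.range m, Real.log (d j) := by
    have : ((NN d m : ℕ) : ℝ) = ∏ j ∈ Finset.range m, (d j : ℝ) := by
      rw [NN]; push_cast; rfl
    rw [this, Real.log_prod]
    intro j _
    have := hd j
    positivity
  have hlogl : Real.log (ll r m) = - ∑ j ∈ Finset.range m, Real.log (1 / r j) := by
    rw [ll, Real.log_prod (fun j _ => (hr j).ne')]
    rw [← Finset.sum_neg_distrib]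
    apply Finset.sum_congr rfl
    intro j _
    rw [one_div, Real.log_inv]
    ring
  rw [← Real.exp_log hNpos, ← Real.exp_log (Real.rpow_pos_of_pos hlpos s), ← Real.exp_add,
    Real.log_rpow hlpos, hlogN, hlogl]
  simp only [one_div]
  ring_nf

-- upper bound
lemma upper_dim (hd : ∀ n, 2 ≤ d n) (hr : ∀ n, 0 < r n) (hrd : ∀ n, r n * d n ≤ 1)
    {t : ℝ} (ht0 : 0 ≤ t)
    (hfreq : ∀ δ : ℝ, 0 < δ → ∃ᶠ n in atTop, (NN d n : ℝ) * ll r n ^ t ≤ δ)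
    {E : Set ℝ}
    (hcov : ∀ n, E ⊆ ⋃ (δ : ℕ → ℕ) (_ : ∀ j, δ j < d j),
      Set.Icc (∑ j ∈ Finset.range n, (δ j : ℝ) * st d r j)
              ((∑ j ∈ Finset.range n, (δ j : ℝ) * st d r j) + ll r n)) :
    dimH E ≤ ENNReal.ofReal t := by
  classical
  set tset : ∀ n : ℕ, (∀ j : Fin n, Fin (d (j:ℕ))) → Set ℝ := fun n i =>
    Set.Icc (∑ j : Fin n, (i j : ℝ) * st d r (j:ℕ))
            ((∑ j : Fin n, (i j : ℝ) * st d r (j:ℕ)) + ll r n) with htset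
  have hdiam : ∀ n i, EMetric.diam (tset n i) = ENNReal.ofReal (ll r n) := by
    intro n i
    rw [htset]
    simp only []
    rw [show (EMetric.diam : Set ℝ → ℝ≥0∞) = Metric.ediam from rfl, Real.ediam_Icc]
    congr 1
    ring
  have hcov2 : ∀ n, E ⊆ ⋃ i, tset n i := by
    intro n x hx
    obtain ⟨S, ⟨δ, rfl⟩, hS⟩ := hcov n hx
    obtain ⟨S₂, ⟨hδ, rfl⟩, hx2⟩ := hS
    refine Set.mem_iUnion.2 ⟨fun j => ⟨δ j, hδ j⟩, ?_⟩
    rw [htset]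
    have he : (∑ j : Fin n, ((⟨δ j, hδ j⟩ : Fin (d (j:ℕ))) : ℝ) * st d r (j:ℕ))
        = ∑ j ∈ Finset.range n, (δ j : ℝ) * st d r j := by
      rw [← Fin.sum_univ_eq_sum_range (fun j => (δ j : ℝ) * st d r j) n]
    simp only [he]
    exact hx2
  have hμ : μH[t] E ≤ liminf (fun n => ∑ i, EMetric.diam (tset n i) ^ t) atTop := by
    apply Measure.hausdorffMeasure_le_liminf_sum t E (fun n => ENNReal.ofReal (ll r n))
    · have := ENNReal.tendsto_ofReal (ll_tendsto d r hd hr hrd)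
      simpa using this
    · exact Eventually.of_forall (fun n i => (hdiam n i).le)
    · exact Eventually.of_forall hcov2
  have hval : ∀ n, (∑ i, EMetric.diam (tset n i) ^ t)
      = ENNReal.ofReal ((NN d n : ℝ) * ll r n ^ t) := by
    intro n
    have hcard : Fintype.card (∀ j : Fin n, Fin (d (j:ℕ))) = NN d n := by
      rw [Fintype.card_pi]
      simp only [Fintype.card_fin]
      rw [NN, ← Fin.prod_univ_eq_prod_range]
    rw [Finset.sum_congr rfl (fun i _ => by rw [hdiam n i]), Finset.sum_const]
    rw [Finset.card_univ, hcard, nsmul_eq_mul]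
    rw [ENNReal.ofReal_rpow_of_pos (ll_pos r hr n), ENNReal.ofReal_mul (by positivity)]
    congr 1
    simp
  have hliminf : liminf (fun n => ∑ i, EMetric.diam (tset n i) ^ t) atTop = 0 := by
    apply le_antisymm _ zero_le
    have hle : ∀ ε : ℝ≥0, 0 < ε →
        liminf (fun n => ∑ i, EMetric.diam (tset n i) ^ t) atTop ≤ (ε : ℝ≥0∞) := by
      intro ε hε
      apply liminf_le_of_frequently_le'
      apply (hfreq ε (by exact_mod_cast hε)).mono
      intro n hn
      rw [hval n]
      calc ENNReal.ofReal ((NN d n : ℝ) * ll r n ^ t) ≤ ENNReal.ofReal ε :=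
            ENNReal.ofReal_le_ofReal hn
        _ = (ε : ℝ≥0∞) := ENNReal.ofReal_coe_nnreal
    apply ENNReal.le_of_forall_pos_le_add
    intro ε hε _
    rw [zero_add]
    exact hle ε hε
  have hzero : μH[t] E = 0 := le_antisymm (hμ.trans_eq hliminf) zero_le
  have hcoe : ((t.toNNReal : ℝ≥0) : ℝ) = t := Real.coe_toNNReal t ht0
  have := dimH_le_of_hausdorffMeasure_ne_top (s := E) (d := t.toNNReal)
    (by rw [hcoe, hzero]; exact ENNReal.zero_ne_top)
  exact this

end Stmt19

open Stmt19 in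
/-- Hausdorff dimension formula for the homogeneous Cantor set
`E(R,D) = ⋂ₙ ⋃_{δ∈Σⁿ} J_δ`, where each level-`n` interval of length
`ℓₙ = ∏_{j≤n} rⱼ` splits into `d_{n+1}` equally spaced subintervals of length
`ℓ_{n+1}` aligned with both endpoints: the left endpoint of `J_{δ₁⋯δₙ}` is
`∑_{j<n} δⱼ · stepⱼ` with `stepⱼ = ℓⱼ (rⱼ + (1 - dⱼrⱼ)/(dⱼ-1))`. Then
`dim_H E = liminf (∑_{j≤n} ln dⱼ)/(∑_{j≤n} ln(1/rⱼ))`. -/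
theorem stmt19 (d : ℕ → ℕ) (hd : ∀ n, 2 ≤ d n)
    (r : ℕ → ℝ) (hr : ∀ n, 0 < r n) (hrd : ∀ n, r n * d n ≤ 1)
    (len : ℕ → ℝ) (hlen : ∀ n, len n = ∏ j ∈ Finset.range n, r j)
    (step : ℕ → ℝ)
    (hstep : ∀ n, step n = len n * (r n + (1 - d n * r n) / (d n - 1)))
    (E : Set ℝ)
    (hE : E = ⋂ n : ℕ, ⋃ (δ : ℕ → ℕ) (_ : ∀ j, δ j < d j),
      Set.Icc (∑ j ∈ Finset.range n, (δ j : ℝ) * step j)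
              ((∑ j ∈ Finset.range n, (δ j : ℝ) * step j) + len n)) :
    dimH E = ENNReal.ofReal (liminf (fun n =>
      (∑ j ∈ Finset.range n, Real.log (d j)) /
      (∑ j ∈ Finset.range n, Real.log (1 / r j))) atTop) := by
  have hlen' : len = ll r := funext fun n => (hlen n).trans rfl
  subst hlen'
  have hstep' : step = st d r := funext fun n => (hstep n).trans rfl
  subst hstep'
  set ratio : ℕ → ℝ := fun n =>
      (∑ j ∈ Finset.range n, Real.log (d j)) /
      (∑ j ∈ Finset.range n, Real.log (1 / r j)) with hratio
  set L : ℝ := liminf ratio atTop with hL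
  -- basic facts about ratio
  have hlog2 : 0 < Real.log 2 := Real.log_pos one_lt_two
  have hdenlb : ∀ n : ℕ, (n:ℝ) * Real.log 2 ≤ ∑ j ∈ Finset.range n, Real.log (1 / r j) := by
    intro n
    calc (n:ℝ) * Real.log 2 = ∑ _j ∈ Finset.range n, Real.log 2 := by
          rw [Finset.sum_const, Finset.card_range, nsmul_eq_mul]
      _ ≤ _ := by
          apply Finset.sum_le_sum
          intro j _
          apply Real.log_le_log (by norm_num)
          rw [le_div_iff₀ (hr j)]
          linarith [r_le_half d r hd hr hrd j]
  have hnum0 : ∀ n : ℕ, 0 ≤ ∑ j ∈ Finset.range n, Real.log (d j) := by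
    intro n
    apply Finset.sum_nonneg
    intro j _
    apply Real.log_nonneg
    have := hd j
    exact_mod_cast Nat.one_le_iff_ne_zero.2 (by omega)
  have hnumden : ∀ n : ℕ, (∑ j ∈ Finset.range n, Real.log (d j))
      ≤ ∑ j ∈ Finset.range n, Real.log (1 / r j) := by
    intro n
    apply Finset.sum_le_sum
    intro j _
    apply Real.log_le_log (by exact_mod_cast Nat.lt_of_lt_of_le Nat.zero_lt_two (hd j))
    rw [le_div_iff₀ (hr j)]
    calc (d j : ℝ) * r j = r j * d j := by ring
      _ ≤ 1 := hrd j
  have hden0 : ∀ n : ℕ, 0 ≤ ∑ j ∈ Finset.range n, Real.log (1 / r j) := by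
    intro n
    have := hdenlb n
    nlinarith [Nat.cast_nonneg (α := ℝ) n]
  have hdenpos : ∀ n : ℕ, 1 ≤ n → 0 < ∑ j ∈ Finset.range n, Real.log (1 / r j) := by
    intro n hn
    have h1 : (1:ℝ) ≤ (n:ℝ) := by exact_mod_cast hn
    nlinarith [hdenlb n]
  have hr0 : ∀ n, 0 ≤ ratio n := fun n => div_nonneg (hnum0 n) (hden0 n)
  have hr1 : ∀ n, ratio n ≤ 1 := by
    intro n
    rcases Nat.eq_zero_or_pos n with h0|h0
    · subst h0; simp [hratio]
    · rw [hratio]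
      exact div_le_one_of_le₀ (hnumden n) (hden0 n)
  have hbdd_le : IsBoundedUnder (· ≤ ·) atTop ratio := isBoundedUnder_of ⟨1, hr1⟩
  have hbdd_ge : IsBoundedUnder (· ≥ ·) atTop ratio := isBoundedUnder_of ⟨0, hr0⟩
  have hcob_ge : IsCoboundedUnder (· ≥ ·) atTop ratio := hbdd_le.isCoboundedUnder_ge
  have hL0 : 0 ≤ L := le_liminf_of_le hcob_ge (Eventually.of_forall hr0)
  have hL1 : L ≤ 1 := liminf_le_of_frequently_le (Frequently.of_forall hr1) hbdd_ge
  -- cover and membership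
  have hcovE : ∀ n, E ⊆ ⋃ (δ : ℕ → ℕ) (_ : ∀ j, δ j < d j),
      Set.Icc (∑ j ∈ Finset.range n, (δ j : ℝ) * st d r j)
              ((∑ j ∈ Finset.range n, (δ j : ℝ) * st d r j) + ll r n) := by
    intro n
    rw [hE]
    exact Set.iInter_subset _ n
  have hgE : ∀ x : ℝ, 0 ≤ x → x < 1 → gg d r x ∈ E := by
    intro x hx0 hx1
    rw [hE]
    refine Set.mem_iInter.2 (fun n => ?_)
    apply Set.mem_iUnion.2
    refine ⟨fun j => dg d j x, Set.mem_iUnion.2 ⟨fun j => dg_lt d hd j x, ?_⟩⟩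
    have h := gg_sub_LL d r hd hr hrd (x := x) n
    have hLL : (∑ j ∈ Finset.range n, (dg d j x : ℝ) * st d r j) = LL d r n x := rfl
    rw [hLL]
    exact ⟨by linarith [h.1], by linarith [h.2]⟩
  -- upper bound
  have hub : dimH E ≤ ENNReal.ofReal L := by
    have hub1 : ∀ tt : ℝ, L < tt → dimH E ≤ ENNReal.ofReal tt := by
      intro tt htt
      have ht0 : 0 ≤ tt := le_of_lt (lt_of_le_of_lt hL0 htt)
      apply upper_dim d r hd hr hrd ht0 _ hcovE
      intro δ hδ
      have h1 : L < (L + tt)/2 := by linarith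
      have h2 : (L + tt)/2 < tt := by linarith
      have hfr : ∃ᶠ n in atTop, ratio n < (L + tt)/2 :=
        frequently_lt_of_liminf_lt hcob_ge h1
      have hq1 : Real.exp (((L + tt)/2 - tt) * Real.log 2) < 1 := by
        rw [Real.exp_lt_one_iff]
        nlinarith
      have hev : ∀ᶠ n : ℕ in atTop,
          Real.exp (((L + tt)/2 - tt) * Real.log 2) ^ n ≤ δ ∧ 1 ≤ n := by
        apply Filter.Eventually.and
        · have := tendsto_pow_atTop_nhds_zero_of_lt_one (Real.exp_pos _).le hq1
          exact (this.eventually_lt_const hδ).mono (fun n hn => hn.le)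
        · exact eventually_ge_atTop 1
      apply (hfr.and_eventually hev).mono
      rintro n ⟨hn1, hn2, hn3⟩
      rw [Nls_eq d r hd hr tt n]
      have hdp := hdenpos n hn3
      have hnum_lt : (∑ j ∈ Finset.range n, Real.log (d j))
          < (L + tt)/2 * (∑ j ∈ Finset.range n, Real.log (1 / r j)) := by
        rw [hratio] at hn1
        exact (div_lt_iff₀ hdp).1 hn1
      have hstep2 : ((L + tt)/2 - tt) * (∑ j ∈ Finset.range n, Real.log (1 / r j))
          ≤ ((L + tt)/2 - tt) * ((n:ℝ) * Real.log 2) := by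
        apply mul_le_mul_of_nonpos_left (hdenlb n) (by linarith)
      calc Real.exp ((∑ j ∈ Finset.range n, Real.log (d j))
            - tt * (∑ j ∈ Finset.range n, Real.log (1 / r j)))
          ≤ Real.exp ((n:ℝ) * (((L + tt)/2 - tt) * Real.log 2)) := by
            apply Real.exp_le_exp.2
            nlinarith
        _ = Real.exp (((L + tt)/2 - tt) * Real.log 2) ^ n := Real.exp_nat_mul _ n
        _ ≤ δ := hn2
    have hseq : Tendsto (fun k : ℕ => L + 1/(k+1)) atTop (𝓝 L) := by
      have h0 := tendsto_one_div_add_atTop_nhds_zero_nat (𝕜 := ℝ)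
      have := tendsto_const_nhds (x := L) (f := atTop (α := ℕ)) |>.add h0
      simpa using this
    apply ge_of_tendsto' (ENNReal.tendsto_ofReal hseq)
    intro k
    apply hub1
    have : (0:ℝ) < 1/(k+1) := by positivity
    linarith
  -- lower bound
  have hlb : ENNReal.ofReal L ≤ dimH E := by
    rcases eq_or_lt_of_le hL0 with hLeq|hLpos
    · rw [← hLeq]; simp
    · have hkey : ∀ ss : ℝ, 0 < ss → ss < L → ENNReal.ofReal ss ≤ dimH E := by
        intro ss hss0 hssL
        have hss1 : ss ≤ 1 := le_of_lt (lt_of_lt_of_le hssL hL1)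
        have hev : ∀ᶠ n in atTop, ss < ratio n := eventually_lt_of_lt_liminf hssL hbdd_ge
        obtain ⟨n₁, hn₁⟩ := eventually_atTop.1 (hev.and (eventually_ge_atTop 1))
        apply lower_dim d r hd hr hrd hss0 hss1 (n₀ := n₁) _ hgE
        intro m hm
        obtain ⟨h1, h2⟩ := hn₁ m hm
        have hdp := hdenpos m h2
        have hnum_gt : ss * (∑ j ∈ Finset.range m, Real.log (1 / r j))
            < ∑ j ∈ Finset.range m, Real.log (d j) := by
          rw [hratio] at h1
          exact (lt_div_iff₀ hdp).1 h1
        rw [Nls_eq d r hd hr ss m]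
        exact Real.one_le_exp (by linarith)
      have h2k : ∀ k : ℕ, (0:ℝ) < (k:ℝ) + 2 := by intro k; positivity
      have hseq : Tendsto (fun k : ℕ => L - L/((k:ℝ)+2)) atTop (𝓝 L) := by
        have h1 : Tendsto (fun k : ℕ => ((k:ℝ)+2)) atTop atTop :=
          tendsto_atTop_add_const_right _ 2 tendsto_natCast_atTop_atTop
        have h2 : Tendsto (fun k : ℕ => ((k:ℝ)+2)⁻¹) atTop (𝓝 0) := h1.inv_tendsto_atTop
        have h3 : Tendsto (fun k : ℕ => L * ((k:ℝ)+2)⁻¹) atTop (𝓝 (L * 0)) :=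
          tendsto_const_nhds.mul h2
        have h4 := tendsto_const_nhds (x := L) (f := atTop (α := ℕ)) |>.sub h3
        simp only [mul_zero, sub_zero] at h4
        simpa [div_eq_mul_inv] using h4
      apply le_of_tendsto' (ENNReal.tendsto_ofReal hseq)
      intro k
      apply hkey
      · have hlt : L/((k:ℝ)+2) < L := div_lt_self hLpos (by nlinarith [h2k k])
        linarith
      · have : 0 < L/((k:ℝ)+2) := div_pos hLpos (h2k k)
        linarith
  exact le_antisymm hub hlb
end
end
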